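/- For 0 < p < 1/2 and H(p) < e ≤ 1, the function D(x) = H(x*p) - (1-e)·H(x) - H(p) attains its maximum over [0,1] at x = 1/2, where D(1/2) = e - H(p) > 0. -/

import Mathlib

open Real Set

/-- Binary entropy function (base 2). -/
noncomputable def binH (t : ℝ) : ℝ := -(t * Real.logb 2 t) - (1 - t) * Real.logb 2 (1 - t)

/-- Binary convolution x*p = x(1-p)+p(1-x). -/
def bconv (x p : ℝ) : ℝ := x * (1 - p) + p * (1 - x)

/-- D(x) = H(x*p) - (1-e) H(x) - H(p). -/
noncomputable def Dfun (p e x : ℝ) : ℝ := binH (bconv x p) - (1 - e) * binH x - binH p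

open Filter

set_option maxHeartbeats 1000000

/-- G(z) = 1 - H((1-z)/2), an auxiliary function. -/
noncomputable def Gfun (z : ℝ) : ℝ :=
  ((1 + z) * Real.log (1 + z) + (1 - z) * Real.log (1 - z)) / (2 * Real.log 2)

/-- Taylor coefficients of `Gfun` (shifted by 2). -/
noncomputable def cseq (n : ℕ) : ℝ :=
  (1 + (-1 : ℝ) ^ n) / (((n : ℝ) + 1) * ((n : ℝ) + 2)) / (2 * Real.log 2)

lemma cseq_nonneg (n : ℕ) : 0 ≤ cseq n := by
  have h2 : (0:ℝ) < Real.log 2 := Real.log_pos (by norm_num)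
  have h : (0:ℝ) ≤ 1 + (-1:ℝ)^n := by
    rcases Nat.even_or_odd n with h | h
    · rw [h.neg_one_pow]; norm_num
    · rw [h.neg_one_pow]; norm_num
  have hn : (0:ℝ) < ((n:ℝ)+1) * ((n:ℝ)+2) := by positivity
  exact div_nonneg (div_nonneg h hn.le) (by positivity)

lemma hasSum_aux {w : ℝ} (hw : |w| < 1) :
    HasSum (fun n : ℕ => w ^ (n + 2) / (((n:ℝ) + 1) * ((n:ℝ) + 2)))
      ((1 - w) * Real.log (1 - w) + w) := by
  have h1 : HasSum (fun n : ℕ => w ^ (n + 1) / ((n:ℝ) + 1)) (-Real.log (1 - w)) :=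
    Real.hasSum_pow_div_log_of_abs_lt_one hw
  have h2 : HasSum (fun n : ℕ => w ^ (n + 2) / ((n:ℝ) + 2)) (-Real.log (1 - w) - w) := by
    have h := (hasSum_nat_add_iff' (f := fun n : ℕ => w ^ (n + 1) / ((n:ℝ) + 1)) 1).mpr h1
    simp only [Finset.range_one, Finset.sum_singleton, Nat.cast_zero, pow_one] at h
    have heq : (fun n : ℕ => w ^ (n + 1 + 1) / ((↑(n+1):ℝ) + 1))
        = fun n : ℕ => w ^ (n + 2) / ((n:ℝ) + 2) := by
      funext n; push_cast; ring_nf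
    rw [heq] at h
    simpa using h
  have h3 : HasSum (fun n : ℕ => w * (w ^ (n + 1) / ((n:ℝ) + 1)))
      (w * -Real.log (1 - w)) := h1.mul_left w
  have h4 := h3.sub h2
  have e1 : (fun n : ℕ => w * (w ^ (n+1) / ((n:ℝ)+1)) - w ^ (n+2) / ((n:ℝ)+2))
      = fun n : ℕ => w ^ (n+2) / (((n:ℝ)+1) * ((n:ℝ)+2)) := by
    funext n
    have hn1 : ((n:ℝ)+1) ≠ 0 := by positivity
    have hn2 : ((n:ℝ)+2) ≠ 0 := by positivity
    field_simp
    ring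
  rw [e1] at h4
  rw [show (1 - w) * Real.log (1 - w) + w = w * -Real.log (1 - w) - (-Real.log (1 - w) - w) by ring]
  exact h4

lemma hasSum_G {z : ℝ} (hz : |z| < 1) :
    HasSum (fun n : ℕ => cseq n * z ^ (n + 2)) (Gfun z) := by
  have hz' : |(-z)| < 1 := by rwa [abs_neg]
  have hA := hasSum_aux hz
  have hB := hasSum_aux hz'
  have hB' : HasSum (fun n : ℕ => (-z) ^ (n+2) / (((n:ℝ)+1) * ((n:ℝ)+2)))
      ((1 + z) * Real.log (1 + z) - z) := by
    have : (1:ℝ) - -z = 1 + z := by ring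
    rw [this] at hB
    rw [sub_eq_add_neg]
    exact hB
  have hAB := (hA.add hB').div_const (2 * Real.log 2)
  have l2 : Real.log 2 ≠ 0 := ne_of_gt (Real.log_pos (by norm_num))
  have e1 : (fun n : ℕ => (z ^ (n+2) / (((n:ℝ)+1) * ((n:ℝ)+2))
      + (-z) ^ (n+2) / (((n:ℝ)+1) * ((n:ℝ)+2))) / (2 * Real.log 2))
      = fun n : ℕ => cseq n * z ^ (n+2) := by
    funext n
    have hneg : (-z) ^ (n+2) = (-1:ℝ)^n * z^(n+2) := by
      rw [neg_pow, pow_add]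
      ring_nf
    rw [hneg]
    unfold cseq
    have hn1 : ((n:ℝ)+1) ≠ 0 := by positivity
    have hn2 : ((n:ℝ)+2) ≠ 0 := by positivity
    field_simp
  rw [e1] at hAB
  rw [show Gfun z = ((1 - z) * Real.log (1 - z) + z + ((1 + z) * Real.log (1 + z) - z)) / (2 * Real.log 2) by unfold Gfun; ring]
  exact hAB

lemma Gfun_nonneg {z : ℝ} (h0 : 0 ≤ z) (h1 : z < 1) : 0 ≤ Gfun z :=
  (hasSum_G (by rwa [abs_of_nonneg h0])).nonneg fun n => by
    have := cseq_nonneg n; positivity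

lemma Gfun_le_one {z : ℝ} (h0 : 0 ≤ z) (h1 : z ≤ 1) : Gfun z ≤ 1 := by
  have hlog2 : (0:ℝ) < Real.log 2 := Real.log_pos (by norm_num)
  unfold Gfun
  rw [div_le_one (by positivity)]
  have h1z : (0:ℝ) ≤ Real.log (1+z) := Real.log_nonneg (by linarith)
  have h2z : Real.log (1+z) ≤ Real.log 2 := Real.log_le_log (by linarith) (by linarith)
  have hb : (1-z) * Real.log (1-z) ≤ 0 := by
    rcases eq_or_lt_of_le h1 with h | h
    · rw [← h]; norm_num
    · have hl : Real.log (1-z) ≤ 0 := Real.log_nonpos (by linarith) (by linarith)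
      nlinarith
  nlinarith

lemma sum_cseq_le (N : ℕ) : ∑ n ∈ Finset.range N, cseq n ≤ 1 := by
  have key : ∀ z : ℝ, 0 ≤ z → z < 1 →
      ∑ n ∈ Finset.range N, cseq n * z ^ (n+2) ≤ 1 := by
    intro z h0 h1
    have hG := hasSum_G (z := z) (by rwa [abs_of_nonneg h0])
    have hle := sum_le_hasSum (Finset.range N)
      (fun n _ => by have := cseq_nonneg n; positivity) hG
    exact hle.trans (Gfun_le_one h0 h1.le)
  have hcont : Tendsto (fun z : ℝ => ∑ n ∈ Finset.range N, cseq n * z ^ (n+2))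
      (nhdsWithin 1 (Ico (0:ℝ) 1)) (nhds (∑ n ∈ Finset.range N, cseq n * (1:ℝ) ^ (n+2))) := by
    apply Tendsto.mono_left _ nhdsWithin_le_nhds
    exact Continuous.tendsto (by continuity) 1
  have hne : (nhdsWithin (1:ℝ) (Ico (0:ℝ) 1)).NeBot := by
    apply mem_closure_iff_nhdsWithin_neBot.mp
    rw [closure_Ico (by norm_num : (0:ℝ) ≠ 1)]
    exact ⟨by norm_num, le_refl 1⟩
  have hle := le_of_tendsto hcont
    (eventually_nhdsWithin_of_forall fun z hz => key z hz.1 hz.2)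
  simpa using hle

lemma summable_cseq : Summable cseq :=
  summable_of_sum_range_le cseq_nonneg sum_cseq_le

lemma tsum_cseq_le : ∑' n, cseq n ≤ 1 :=
  Summable.tsum_le_of_sum_range_le summable_cseq sum_cseq_le

/-- Chebyshev-type inequality: G(a)G(b) ≤ G(ab). -/
lemma cheb {a b : ℝ} (ha0 : 0 ≤ a) (ha1 : a < 1) (hb0 : 0 ≤ b) (hb1 : b < 1) :
    Gfun a * Gfun b ≤ Gfun (a * b) := by
  have hab0 : 0 ≤ a * b := mul_nonneg ha0 hb0
  have hab1 : a * b < 1 := by nlinarith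
  have hGa := hasSum_G (z := a) (by rwa [abs_of_nonneg ha0])
  have hGb := hasSum_G (z := b) (by rwa [abs_of_nonneg hb0])
  have hGab := hasSum_G (z := a * b) (by rwa [abs_of_nonneg hab0])
  set fa : ℕ → ℝ := fun n => cseq n * a ^ (n + 2) with hfa_def
  set fb : ℕ → ℝ := fun n => cseq n * b ^ (n + 2) with hfb_def
  set fab : ℕ → ℝ := fun n => cseq n * (a * b) ^ (n + 2) with hfab_def
  have hfa0 : ∀ n, 0 ≤ fa n := fun n => by
    have := cseq_nonneg n; simp only [hfa_def]; positivity
  have hfb0 : ∀ n, 0 ≤ fb n := fun n => by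
    have := cseq_nonneg n; simp only [hfb_def]; positivity
  have hfab0 : ∀ n, 0 ≤ fab n := fun n => by
    have := cseq_nonneg n; simp only [hfab_def]; positivity
  have hnorm : ∀ (f : ℕ → ℝ), (∀ n, 0 ≤ f n) → Summable f → Summable (fun n => ‖f n‖) := by
    intro f hf hs
    refine hs.congr fun n => ?_
    rw [Real.norm_eq_abs, abs_of_nonneg (hf n)]
  have hsumT : Summable (fun q : ℕ × ℕ => fa q.1 * fb q.2) :=
    summable_mul_of_summable_norm (hnorm fa hfa0 hGa.summable) (hnorm fb hfb0 hGb.summable)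
  have hsumU : Summable (fun q : ℕ × ℕ => cseq q.1 * fab q.2) :=
    summable_mul_of_summable_norm (hnorm cseq cseq_nonneg summable_cseq)
      (hnorm fab hfab0 hGab.summable)
  have hT : HasSum (fun q : ℕ × ℕ => fa q.1 * fb q.2) (Gfun a * Gfun b) :=
    hGa.mul hGb hsumT
  have hU : HasSum (fun q : ℕ × ℕ => cseq q.1 * fab q.2) ((∑' n, cseq n) * Gfun (a * b)) :=
    summable_cseq.hasSum.mul hGab hsumU
  have hTswap : HasSum (fun q : ℕ × ℕ => fa q.2 * fb q.1) (Gfun a * Gfun b) :=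
    (Equiv.prodComm ℕ ℕ).hasSum_iff.mpr hT
  have hUswap : HasSum (fun q : ℕ × ℕ => cseq q.2 * fab q.1) ((∑' n, cseq n) * Gfun (a * b)) :=
    (Equiv.prodComm ℕ ℕ).hasSum_iff.mpr hU
  have h2T := hT.add hTswap
  have h2U := hU.add hUswap
  have hpt : ∀ q : ℕ × ℕ, fa q.1 * fb q.2 + fa q.2 * fb q.1
      ≤ cseq q.1 * fab q.2 + cseq q.2 * fab q.1 := by
    rintro ⟨n, m⟩
    simp only [hfa_def, hfb_def, hfab_def]
    have key : ∀ n m : ℕ, n ≤ m →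
        cseq n * a ^ (n+2) * (cseq m * b ^ (m+2)) + cseq m * a ^ (m+2) * (cseq n * b ^ (n+2))
        ≤ cseq n * (cseq m * (a*b) ^ (m+2)) + cseq m * (cseq n * (a*b) ^ (n+2)) := by
      intro n m hnm
      have hc1 := cseq_nonneg n
      have hc2 := cseq_nonneg m
      have hpa : a ^ (m+2) ≤ a ^ (n+2) := pow_le_pow_of_le_one ha0 ha1.le (by omega)
      have hpb : b ^ (m+2) ≤ b ^ (n+2) := pow_le_pow_of_le_one hb0 hb1.le (by omega)
      have hkey : 0 ≤ cseq n * cseq m *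
          ((a ^ (n+2) - a ^ (m+2)) * (b ^ (n+2) - b ^ (m+2))) :=
        mul_nonneg (mul_nonneg hc1 hc2)
          (mul_nonneg (sub_nonneg.mpr hpa) (sub_nonneg.mpr hpb))
      have hab2 : (a*b) ^ (m+2) = a ^ (m+2) * b ^ (m+2) := mul_pow a b (m+2)
      have hab3 : (a*b) ^ (n+2) = a ^ (n+2) * b ^ (n+2) := mul_pow a b (n+2)
      rw [hab2, hab3]
      nlinarith [hkey]
    rcases le_total n m with h | h
    · exact key n m h
    · have := key m n h
      linarith
  have hfinal := hasSum_le hpt h2T h2U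
  have hS0 : 0 ≤ ∑' n, cseq n := tsum_nonneg cseq_nonneg
  have hGab0 : 0 ≤ Gfun (a * b) := Gfun_nonneg hab0 hab1
  nlinarith [tsum_cseq_le, hfinal, hGab0]

lemma binH_eq_Gfun {x : ℝ} (h0 : 0 < x) (h1 : x < 1) : binH x = 1 - Gfun (1 - 2*x) := by
  unfold binH Gfun Real.logb
  have hx : x ≠ 0 := ne_of_gt h0
  have hx1 : (1:ℝ) - x ≠ 0 := by intro h; apply absurd h1; linarith [h]
  have l2 : Real.log 2 ≠ 0 := ne_of_gt (Real.log_pos (by norm_num))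
  rw [show (1:ℝ) + (1 - 2*x) = 2*(1-x) by ring, show (1:ℝ) - (1 - 2*x) = 2*x by ring,
      Real.log_mul two_ne_zero hx1, Real.log_mul two_ne_zero hx]
  field_simp
  ring

lemma binH_symm (x : ℝ) : binH (1 - x) = binH x := by
  unfold binH; rw [sub_sub_cancel]; ring

lemma binH_zero : binH 0 = 0 := by simp [binH]

lemma binH_half : binH (1/2) = 1 := by
  have l2 : Real.log 2 ≠ 0 := ne_of_gt (Real.log_pos (by norm_num))
  unfold binH Real.logb
  rw [show (1:ℝ) - 1/2 = 1/2 by norm_num, show (1:ℝ)/2 = 2⁻¹ by norm_num, Real.log_inv]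
  field_simp
  norm_num

lemma Dfun_symm (p e x : ℝ) : Dfun p e (1 - x) = Dfun p e x := by
  unfold Dfun
  have h1 : bconv (1 - x) p = 1 - bconv x p := by unfold bconv; ring
  rw [h1, binH_symm, binH_symm]

lemma key_ineq {p e : ℝ} (hp0 : 0 < p) (hp1 : p < 1/2) (he0 : binH p < e)
    {x : ℝ} (hx0 : 0 < x) (hx1 : x ≤ 1/2) : Dfun p e x ≤ e - binH p := by
  have hGq : Gfun (1-2*p) = 1 - binH p := by
    rw [binH_eq_Gfun hp0 (by linarith)]; ring
  have hGx : binH x = 1 - Gfun (1-2*x) := binH_eq_Gfun hx0 (by linarith)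
  have hbp : binH (bconv x p) = 1 - Gfun ((1-2*x)*(1-2*p)) := by
    have h0 : 0 < bconv x p := by unfold bconv; nlinarith
    have h1 : bconv x p < 1 := by unfold bconv; nlinarith
    rw [binH_eq_Gfun h0 h1,
      show (1:ℝ) - 2*bconv x p = (1-2*x)*(1-2*p) by unfold bconv; ring]
  have hu0 : (0:ℝ) ≤ 1 - 2*x := by linarith
  have hu1 : (1:ℝ) - 2*x < 1 := by linarith
  have hq0 : (0:ℝ) ≤ 1 - 2*p := by linarith
  have hq1 : (1:ℝ) - 2*p < 1 := by linarith
  have hcheb := cheb hu0 hu1 hq0 hq1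
  have hGu0 : 0 ≤ Gfun (1-2*x) := Gfun_nonneg hu0 hu1
  have h5 : (1-e) * Gfun (1-2*x) ≤ Gfun (1-2*x) * Gfun (1-2*p) := by
    rw [mul_comm (Gfun (1-2*x))]
    apply mul_le_mul_of_nonneg_right _ hGu0
    rw [hGq]; linarith
  unfold Dfun
  rw [hbp, hGx]
  nlinarith [h5, hcheb]

/-- When H(p) < e ≤ 1, D attains its maximum over [0,1] at x = 1/2,
where D(1/2) = e - H(p) > 0. -/
theorem stmt6 (p e : ℝ) (hp0 : 0 < p) (hp1 : p < 1 / 2) (he0 : binH p < e) (he1 : e ≤ 1) :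
    (∀ x ∈ Set.Icc (0 : ℝ) 1, Dfun p e x ≤ Dfun p e (1 / 2)) ∧
      Dfun p e (1 / 2) = e - binH p ∧ 0 < e - binH p := by
  have hD2 : Dfun p e (1/2) = e - binH p := by
    have hb : bconv (1/2) p = 1/2 := by unfold bconv; ring
    unfold Dfun; rw [hb, binH_half]; ring
  refine ⟨?_, hD2, by linarith⟩
  intro x hx
  rw [hD2]
  have key : ∀ y : ℝ, 0 ≤ y → y ≤ 1/2 → Dfun p e y ≤ e - binH p := by
    intro y hy0 hy1
    rcases eq_or_lt_of_le hy0 with h | h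
    · have hz : Dfun p e 0 = 0 := by
        unfold Dfun
        rw [show bconv 0 p = p by unfold bconv; ring, binH_zero]
        ring
      rw [← h, hz]; linarith
    · exact key_ineq hp0 hp1 he0 h hy1
  rcases le_total x (1/2) with h | h
  · exact key x hx.1 h
  · have h2 := key (1 - x) (by linarith [hx.2]) (by linarith)
    rwa [Dfun_symm] at h2
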